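/- Let ρ_1, ρ_2, ρ_3 be density matrices on ℂ^{d_1}, ℂ^{d_2}, ℂ^{d_3} respectively, and for each k let P_k, Q_k be d_k×d_k complex matrices. Then for the uncorrelated state ρ = ρ_1 ⊗ ρ_2 ⊗ ρ_3 one has |Tr((P_1Q_1 ⊗ P_2Q_2 ⊗ P_3Q_3)ρ)|² ≤ Re Tr((P_1P_1† ⊗ Q_2†Q_2 ⊗ 𝟙)ρ) · Re Tr((𝟙 ⊗ P_2P_2† ⊗ Q_3†Q_3)ρ) · Re Tr((Q_1†Q_1 ⊗ 𝟙 ⊗ P_3P_3†)ρ), where 𝟙 denotes the identity matrix on the respective factor. -/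

import Mathlib

open Matrix
open scoped Kronecker ComplexOrder

noncomputable section

/-- A density matrix: a positive semidefinite complex matrix of trace 1. -/
def IsDensityMatrix {ι : Type*} [Fintype ι] (ρ : Matrix ι ι ℂ) : Prop :=
  ρ.PosSemidef ∧ ρ.trace = 1

def mvec {n : Type*} [Fintype n] (A : Matrix n n ℂ) : EuclideanSpace ℂ (n × n) :=
  WithLp.toLp 2 (fun p : n × n => A p.1 p.2)

lemma trace_conjTranspose_mul_eq_inner {n : Type*} [Fintype n] (A B : Matrix n n ℂ) :
    (Aᴴ * B).trace = inner ℂ (mvec A) (mvec B) := by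
  simp only [Matrix.trace, Matrix.diag, Matrix.mul_apply, Matrix.conjTranspose_apply,
    PiLp.inner_apply, RCLike.inner_apply', mvec, PiLp.toLp_apply, Fintype.sum_prod_type]
  rw [Finset.sum_comm]
  rfl

lemma trace_sandwich {n : Type*} [Fintype n] (S X : Matrix n n ℂ) :
    (X * (S * S)).trace = (S * X * S).trace := by
  rw [mul_assoc, Matrix.trace_mul_comm S, mul_assoc]

open scoped MatrixOrder Matrix.Norms.L2Operator in
lemma trace_mul_conjTranspose_mul_psd {n : Type*} [Fintype n] [DecidableEq n]
    {ρ : Matrix n n ℂ} (hρ : ρ.PosSemidef) (M : Matrix n n ℂ) :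
    ∃ r : ℝ, 0 ≤ r ∧ ((M * Mᴴ) * ρ).trace = (r : ℂ) := by
  set S := CFC.sqrt ρ with hSdef
  have hS : Sᴴ = S := (CFC.sqrt_nonneg ρ).posSemidef.isHermitian
  have hSS : S * S = ρ := CFC.sqrt_mul_sqrt_self ρ hρ.nonneg
  have key : ((M * Mᴴ) * ρ).trace = ((Mᴴ * S)ᴴ * (Mᴴ * S)).trace := by
    rw [conjTranspose_mul, conjTranspose_conjTranspose, hS, ← hSS, trace_sandwich]
    simp [mul_assoc]
  refine ⟨‖mvec (Mᴴ * S)‖ ^ 2, by positivity, ?_⟩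
  rw [key, trace_conjTranspose_mul_eq_inner, inner_self_eq_norm_sq_to_K]
  norm_cast

open scoped MatrixOrder Matrix.Norms.L2Operator in
lemma cs_trace {n : Type*} [Fintype n] [DecidableEq n]
    {ρ : Matrix n n ℂ} (hρ : ρ.PosSemidef) (P Q : Matrix n n ℂ) :
    ‖((P * Q) * ρ).trace‖ ^ 2 ≤
      (((P * Pᴴ) * ρ).trace).re * (((Qᴴ * Q) * ρ).trace).re := by
  set S := CFC.sqrt ρ with hSdef
  have hS : Sᴴ = S := (CFC.sqrt_nonneg ρ).posSemidef.isHermitian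
  have hSS : S * S = ρ := CFC.sqrt_mul_sqrt_self ρ hρ.nonneg
  set A := Pᴴ * S with hAdef
  set B := Q * S with hBdef
  have h1 : ((P * Q) * ρ).trace = (Aᴴ * B).trace := by
    rw [hAdef, hBdef, conjTranspose_mul, conjTranspose_conjTranspose, hS, ← hSS,
      trace_sandwich]
    simp [mul_assoc]
  have h2 : ((P * Pᴴ) * ρ).trace = (Aᴴ * A).trace := by
    rw [hAdef, conjTranspose_mul, conjTranspose_conjTranspose, hS, ← hSS, trace_sandwich]
    simp [mul_assoc]
  have h3 : ((Qᴴ * Q) * ρ).trace = (Bᴴ * B).trace := by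
    rw [hBdef, conjTranspose_mul, hS, ← hSS, trace_sandwich]
    simp [mul_assoc]
  rw [h1, h2, h3, trace_conjTranspose_mul_eq_inner, trace_conjTranspose_mul_eq_inner,
    trace_conjTranspose_mul_eq_inner]
  set v := mvec A
  set w := mvec B
  have hcs : ‖(inner ℂ v w : ℂ)‖ ≤ ‖v‖ * ‖w‖ := norm_inner_le_norm v w
  have hv : (inner ℂ v v : ℂ) = ((‖v‖ : ℂ)) ^ 2 := inner_self_eq_norm_sq_to_K v
  have hw : (inner ℂ w w : ℂ) = ((‖w‖ : ℂ)) ^ 2 := inner_self_eq_norm_sq_to_K w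
  rw [hv, hw]
  have : ‖(inner ℂ v w : ℂ)‖ ^ 2 ≤ (‖v‖ * ‖w‖) ^ 2 :=
    pow_le_pow_left₀ (by positivity) hcs 2
  calc ‖(inner ℂ v w : ℂ)‖ ^ 2 ≤ (‖v‖ * ‖w‖) ^ 2 := this
    _ = (((‖v‖ : ℂ)) ^ 2).re * (((‖w‖ : ℂ)) ^ 2).re := by
        simp [← Complex.ofReal_pow]
        ring

/-- **Combined multipartite Cauchy–Schwarz bound for uncorrelated states (Eq. (30), N = 3).**
For the product state `ρ = ρ₁ ⊗ ρ₂ ⊗ ρ₃`: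
`|⟨P₁Q₁ ⊗ P₂Q₂ ⊗ P₃Q₃⟩|² ≤ ⟨P₁P₁† ⊗ Q₂†Q₂ ⊗ 𝟙⟩ ⟨𝟙 ⊗ P₂P₂† ⊗ Q₃†Q₃⟩ ⟨Q₁†Q₁ ⊗ 𝟙 ⊗ P₃P₃†⟩`. -/
theorem uncorrelated_tripartite_combined_cauchy_schwarz {d₁ d₂ d₃ : ℕ}
    (ρ₁ : Matrix (Fin d₁) (Fin d₁) ℂ) (ρ₂ : Matrix (Fin d₂) (Fin d₂) ℂ)
    (ρ₃ : Matrix (Fin d₃) (Fin d₃) ℂ)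
    (h₁ : IsDensityMatrix ρ₁) (h₂ : IsDensityMatrix ρ₂) (h₃ : IsDensityMatrix ρ₃)
    (P₁ Q₁ : Matrix (Fin d₁) (Fin d₁) ℂ) (P₂ Q₂ : Matrix (Fin d₂) (Fin d₂) ℂ)
    (P₃ Q₃ : Matrix (Fin d₃) (Fin d₃) ℂ) :
    ‖(((P₁ * Q₁) ⊗ₖ ((P₂ * Q₂) ⊗ₖ (P₃ * Q₃))) *
        (ρ₁ ⊗ₖ (ρ₂ ⊗ₖ ρ₃))).trace‖ ^ 2 ≤
      ((((P₁ * P₁ᴴ) ⊗ₖ ((Q₂ᴴ * Q₂) ⊗ₖ (1 : Matrix (Fin d₃) (Fin d₃) ℂ))) *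
        (ρ₁ ⊗ₖ (ρ₂ ⊗ₖ ρ₃))).trace).re *
      ((((1 : Matrix (Fin d₁) (Fin d₁) ℂ) ⊗ₖ ((P₂ * P₂ᴴ) ⊗ₖ (Q₃ᴴ * Q₃))) *
        (ρ₁ ⊗ₖ (ρ₂ ⊗ₖ ρ₃))).trace).re *
      ((((Q₁ᴴ * Q₁) ⊗ₖ ((1 : Matrix (Fin d₂) (Fin d₂) ℂ) ⊗ₖ (P₃ * P₃ᴴ))) *
        (ρ₁ ⊗ₖ (ρ₂ ⊗ₖ ρ₃))).trace).re := by
  obtain ⟨a₁, ha₁0, ha₁⟩ := trace_mul_conjTranspose_mul_psd h₁.1 P₁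
  obtain ⟨a₂, ha₂0, ha₂⟩ := trace_mul_conjTranspose_mul_psd h₂.1 P₂
  obtain ⟨a₃, ha₃0, ha₃⟩ := trace_mul_conjTranspose_mul_psd h₃.1 P₃
  obtain ⟨b₁, hb₁0, hb₁⟩ := trace_mul_conjTranspose_mul_psd h₁.1 Q₁ᴴ
  obtain ⟨b₂, hb₂0, hb₂⟩ := trace_mul_conjTranspose_mul_psd h₂.1 Q₂ᴴ
  obtain ⟨b₃, hb₃0, hb₃⟩ := trace_mul_conjTranspose_mul_psd h₃.1 Q₃ᴴ
  rw [conjTranspose_conjTranspose] at hb₁ hb₂ hb₃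
  have e₁ := cs_trace h₁.1 P₁ Q₁
  have e₂ := cs_trace h₂.1 P₂ Q₂
  have e₃ := cs_trace h₃.1 P₃ Q₃
  rw [ha₁, hb₁, Complex.ofReal_re, Complex.ofReal_re] at e₁
  rw [ha₂, hb₂, Complex.ofReal_re, Complex.ofReal_re] at e₂
  rw [ha₃, hb₃, Complex.ofReal_re, Complex.ofReal_re] at e₃
  simp only [← Matrix.mul_kronecker_mul, Matrix.trace_kronecker, Matrix.one_mul,
    Matrix.mul_one]
  rw [h₁.2, h₂.2, h₃.2, ha₁, ha₂, ha₃, hb₁, hb₂, hb₃, mul_one, one_mul, one_mul]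
  simp only [← Complex.ofReal_mul, Complex.ofReal_re]
  calc ‖(P₁ * Q₁ * ρ₁).trace * ((P₂ * Q₂ * ρ₂).trace * (P₃ * Q₃ * ρ₃).trace)‖ ^ 2
      = ‖(P₁ * Q₁ * ρ₁).trace‖ ^ 2 *
        (‖(P₂ * Q₂ * ρ₂).trace‖ ^ 2 *
         ‖(P₃ * Q₃ * ρ₃).trace‖ ^ 2) := by
        rw [norm_mul, norm_mul, mul_pow, mul_pow]
    _ ≤ (a₁ * b₁) * ((a₂ * b₂) * (a₃ * b₃)) := by
        exact mul_le_mul e₁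
          (mul_le_mul e₂ e₃ (sq_nonneg _) (mul_nonneg ha₂0 hb₂0))
          (mul_nonneg (sq_nonneg _) (sq_nonneg _)) (mul_nonneg ha₁0 hb₁0)
    _ = a₁ * b₂ * (a₂ * b₃) * (b₁ * a₃) := by ring
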